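/- The generating function of skew Dyck path prefixes of arbitrary endpoint (open ended paths) is S(1) = -((z+1)(z²+3z-2) + (z+2)√(1-6z²+5z⁴)) / (2z(z²+2z-1)), with expansion 1+z+2z²+3z³+7z⁴+11z⁵+26z⁶+43z⁷+102z⁸+175z⁹+416z¹⁰+O(z¹¹). -/

import Mathlib

inductive SkewStep : Type
  | up : SkewStep
  | down : SkewStep
  | red : SkewStep
deriving DecidableEq

def SkewStep.val : SkewStep → ℤ
  | SkewStep.up => 1
  | SkewStep.down => -1
  | SkewStep.red => -1

def SkewStep.ok (a b : SkewStep) : Prop :=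
  ¬ (a = SkewStep.up ∧ b = SkewStep.red) ∧ ¬ (a = SkewStep.red ∧ b = SkewStep.up)

/-- A partial (open ended) skew Dyck path in the decorated model: no forbidden
adjacent pair and every prefix stays weakly above the x-axis; the endpoint is
arbitrary. -/
def IsSkewPrefix (l : List SkewStep) : Prop :=
  l.Chain' SkewStep.ok ∧ ∀ k, 0 ≤ ((l.take k).map SkewStep.val).sum

instance : Fintype SkewStep := ⟨⟨{.up, .down, .red}, by decide⟩, fun x => by cases x <;> decide⟩

namespace Skew
abbrev L := List SkewStep
def wsum (l : L) : ℤ := (l.map SkewStep.val).sum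

lemma wsum_append (a b : L) : wsum (a ++ b) = wsum a + wsum b := by simp [wsum]

lemma wsum_take_append (a b : L) (k : ℕ) :
    wsum ((a ++ b).take k) = wsum (a.take k) + wsum (b.take (k - a.length)) := by
  rw [List.take_append, wsum_append]

lemma wsum_cons (x : SkewStep) (l : L) : wsum (x :: l) = x.val + wsum l := by simp [wsum]

lemma val_cases (x : SkewStep) : x.val = 1 ∨ x.val = -1 := by cases x <;> simp [SkewStep.val]

lemma wsum_take_of_le {l : L} {k : ℕ} (h : l.length ≤ k) : wsum (l.take k) = wsum l := by
  rw [List.take_of_length_le h]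

lemma NN_prefix {q r : L} (h : ∀ k, 0 ≤ wsum ((q ++ r).take k)) :
    ∀ k, 0 ≤ wsum (q.take k) := by
  intro k
  rcases le_or_gt k q.length with hk | hk
  · have := h k
    rwa [wsum_take_append, Nat.sub_eq_zero_of_le hk, List.take_zero,
      show wsum ([] : L) = 0 from rfl, add_zero] at this
  · rw [List.take_of_length_le hk.le]
    have := h q.length
    rwa [wsum_take_append, Nat.sub_self, List.take_zero, List.take_length,
      show wsum ([] : L) = 0 from rfl, add_zero] at this

/-- Split at the first passage below 0. -/
lemma split_neg : ∀ (N : ℕ) (m : L), m.length ≤ N → wsum m < 0 →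
    ∃ q X s, m = q ++ X :: s ∧ wsum q = 0 ∧ (∀ k, 0 ≤ wsum (q.take k)) ∧ X.val = -1 := by
  intro N
  induction N with
  | zero =>
    intro m hm h
    rw [Nat.le_zero, List.length_eq_zero_iff] at hm
    subst hm; simp [wsum] at h
  | succ N ih =>
    intro m hlen h
    match m with
    | [] => simp [wsum] at h
    | a :: m' =>
      rcases val_cases a with h1 | h1
      · have hm' : wsum m' < 0 := by rw [wsum_cons, h1] at h; omega
        have hm'len : m'.length ≤ N := by simpa using hlen
        obtain ⟨q', X', s', rfl, hq0, hqNN, hX'⟩ := ih m' hm'len hm'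
        have hs' : wsum s' < 0 := by
          rw [wsum_cons, h1, wsum_append, wsum_cons, hq0, hX'] at h; omega
        have hs'len : s'.length ≤ N := by
          have := hm'len; simp [List.length_append] at this; omega
        obtain ⟨q'', X'', s'', rfl, hq0'', hqNN'', hX''⟩ := ih s' hs'len hs'
        refine ⟨a :: (q' ++ X' :: q''), X'', s'', by simp, ?_, ?_, hX''⟩
        · rw [wsum_cons, h1, wsum_append, wsum_cons, hq0, hq0'', hX']; ring
        · intro k
          match k with
          | 0 => simp [wsum]
          | k + 1 =>
            rw [List.take_succ_cons, wsum_cons, h1, wsum_take_append]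
            have h2 : 0 ≤ wsum (q'.take k) := hqNN k
            have h3 : -1 ≤ wsum ((X' :: q'').take (k - q'.length)) := by
              match hk : k - q'.length with
              | 0 => simp [wsum]
              | j + 1 =>
                rw [List.take_succ_cons, wsum_cons, hX']
                have := hqNN'' j; omega
            omega
      · exact ⟨[], a, m', rfl, rfl, by intro k; simp [wsum], h1⟩

/-- Split at the last visit to level 0. -/
lemma split_pos : ∀ (N : ℕ) (m : L), m.length ≤ N → (∀ k, 0 ≤ wsum (m.take k)) →
    0 < wsum m →
    ∃ q s, m = q ++ .up :: s ∧ wsum q = 0 ∧ (∀ k, 0 ≤ wsum (s.take k)) := by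
  intro N
  induction N with
  | zero =>
    intro m hm _ h
    rw [Nat.le_zero, List.length_eq_zero_iff] at hm
    subst hm; simp [wsum] at h
  | succ N ih =>
    intro m hlen hNN h
    match m with
    | [] => simp [wsum] at h
    | a :: m' =>
      have ha : a = .up := by
        have := hNN 1
        cases a <;> simp_all [wsum, SkewStep.val]
      subst ha
      by_cases hex : ∃ j, j ≤ m'.length ∧ wsum (m'.take j) = -1
      · obtain ⟨j, hj, hj0⟩ := hex
        set t : L := (SkewStep.up :: m').take (j + 1) with ht
        set rest : L := (SkewStep.up :: m').drop (j + 1) with hrest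
        have hsplit : SkewStep.up :: m' = t ++ rest := (List.take_append_drop _ _).symm
        have htsum : wsum t = 0 := by
          rw [ht, List.take_succ_cons, wsum_cons, hj0]; simp [SkewStep.val]
        have htlen : t.length = j + 1 := by
          rw [ht, List.length_take]; simp; omega
        have hrestNN : ∀ k, 0 ≤ wsum (rest.take k) := by
          intro k
          have := hNN (j + 1 + k)
          rw [hsplit, wsum_take_append, htlen,
            wsum_take_of_le (by rw [htlen]; omega : t.length ≤ j + 1 + k), htsum] at this
          simpa using this
        have hrestsum : 0 < wsum rest := by
          rw [hsplit, wsum_append, htsum] at h; omega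
        have hrestlen : rest.length ≤ N := by
          rw [hrest]; simp; simp at hlen; omega
        obtain ⟨q', s', hq's', hq'0, hs'NN⟩ := ih rest hrestlen hrestNN hrestsum
        refine ⟨t ++ q', s', by rw [hsplit, hq's']; simp, ?_, hs'NN⟩
        rw [wsum_append, htsum, hq'0]; ring
      · push_neg at hex
        refine ⟨[], m', rfl, rfl, ?_⟩
        intro k
        rcases le_or_gt k m'.length with hk | hk
        · have h1 := hNN (k + 1)
          rw [List.take_succ_cons, wsum_cons] at h1
          have h2 := hex k hk
          simp [SkewStep.val] at h1
          omega
        · rw [wsum_take_of_le hk.le]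
          rw [wsum_cons] at h; simp [SkewStep.val] at h; omega


/-! ### Predicates and counting -/

def Pm (l : L) : Prop := IsSkewPrefix l ∧ wsum l = 0
def Pt (l : L) : Prop := Pm l ∧ l.getLast? ≠ some .red
def Pr (l : L) : Prop := Pm l ∧ l.getLast? = some .red
def Pg (l : L) : Prop := IsSkewPrefix l ∧ wsum l ≠ 0
def Pmne (l : L) : Prop := Pm l ∧ l ≠ []

noncomputable def cnt (P : L → Prop) (n : ℕ) : ℕ :=
  Nat.card {l : L // l.length = n ∧ P l}

instance cntFinite (P : L → Prop) (n : ℕ) : Finite {l : L // l.length = n ∧ P l} :=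
  Set.Finite.to_subtype ((List.finite_length_eq SkewStep n).subset fun _ hl => hl.1)

instance pairsFinite (Q R : L → Prop) (n : ℕ) :
    Finite {p : L × L // p.1.length + p.2.length = n ∧ Q p.1 ∧ R p.2} :=
  Set.Finite.to_subtype (((List.finite_length_le SkewStep n).prod
    (List.finite_length_le SkewStep n)).subset fun p hp =>
      ⟨by have h1 := hp.1; simp only [Set.mem_setOf_eq]; omega,
       by have h1 := hp.1; simp only [Set.mem_setOf_eq]; omega⟩)

lemma natCard_sigma {ι : Type*} [Fintype ι] (f : ι → Type*) [∀ i, Finite (f i)] :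
    Nat.card (Σ i, f i) = ∑ i, Nat.card (f i) := by
  letI : ∀ i, Fintype (f i) := fun i => Fintype.ofFinite _
  rw [Nat.card_eq_fintype_card, Fintype.card_sigma]
  exact Finset.sum_congr rfl fun i _ => (Nat.card_eq_fintype_card).symm

lemma card_pairs (Q R : L → Prop) (n : ℕ) :
    Nat.card {p : L × L // p.1.length + p.2.length = n ∧ Q p.1 ∧ R p.2}
      = ∑ ab ∈ Finset.HasAntidiagonal.antidiagonal n, cnt Q ab.1 * cnt R ab.2 := by
  have e : {p : L × L // p.1.length + p.2.length = n ∧ Q p.1 ∧ R p.2} ≃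
      Σ ab : (Finset.HasAntidiagonal.antidiagonal n : Finset (ℕ × ℕ)),
        {l : L // l.length = ab.1.1 ∧ Q l} × {l : L // l.length = ab.1.2 ∧ R l} :=
    { toFun := fun p => ⟨⟨(p.1.1.length, p.1.2.length), Finset.HasAntidiagonal.mem_antidiagonal.2 p.2.1⟩,
        ⟨p.1.1, rfl, p.2.2.1⟩, ⟨p.1.2, rfl, p.2.2.2⟩⟩
      invFun := fun x => ⟨(x.2.1.1, x.2.2.1), by
        refine ⟨?_, x.2.1.2.2, x.2.2.2.2⟩
        rw [x.2.1.2.1, x.2.2.2.1]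
        exact Finset.HasAntidiagonal.mem_antidiagonal.1 x.1.2⟩
      left_inv := fun p => rfl
      right_inv := by
        rintro ⟨⟨⟨a, b⟩, hab⟩, ⟨q, hq1, hq2⟩, ⟨r, hr1, hr2⟩⟩
        dsimp only at hq1 hr1
        subst hq1; subst hr1
        rfl }
  rw [Nat.card_congr e, natCard_sigma, ← Finset.sum_coe_sort (Finset.HasAntidiagonal.antidiagonal n)]
  exact Finset.sum_congr rfl fun ab _ => by rw [Nat.card_prod]; rfl

/-! ### ok and chain helpers -/

lemma ok_right_down (x : SkewStep) : SkewStep.ok x .down := by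
  cases x <;> simp [SkewStep.ok]

lemma ok_down_left (y : SkewStep) : SkewStep.ok .down y := by
  cases y <;> simp [SkewStep.ok]

lemma ok_up_up : SkewStep.ok .up .up := by simp [SkewStep.ok]

lemma ok_up_iff (y : SkewStep) : SkewStep.ok .up y ↔ y ≠ .red := by
  cases y <;> simp [SkewStep.ok]

lemma ok_iff_up (x : SkewStep) : SkewStep.ok x .up ↔ x ≠ .red := by
  cases x <;> simp [SkewStep.ok]

lemma ok_iff_red (x : SkewStep) : SkewStep.ok x .red ↔ x ≠ .up := by
  cases x <;> simp [SkewStep.ok]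

lemma NN_head {l : L} (hNN : ∀ k, 0 ≤ wsum (l.take k)) :
    ∀ y ∈ l.head?, y = SkewStep.up := by
  cases l with
  | nil => simp
  | cons a l' =>
    intro y hy
    have hy' : a = y := by simpa using hy
    subst hy'
    have h1 := hNN 1
    cases a <;> simp_all [wsum, SkewStep.val]

lemma closed_last {l : L} (hNN : ∀ k, 0 ≤ wsum (l.take k)) (h0 : wsum l = 0) :
    ∀ y ∈ l.getLast?, y.val = -1 := by
  rcases List.eq_nil_or_concat l with rfl | ⟨l', y, h⟩
  · simp
  · rw [List.concat_eq_append] at h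
    subst h
    intro z hz
    rw [List.getLast?_concat] at hz
    simp only [Option.mem_def, Option.some.injEq] at hz
    subst hz
    have h1 : 0 ≤ wsum l' := by
      have := hNN l'.length
      rwa [wsum_take_append, Nat.sub_self, List.take_zero, List.take_length,
        show wsum ([] : L) = 0 from rfl, add_zero] at this
    rw [wsum_append, wsum_cons, show wsum ([] : L) = 0 from rfl] at h0
    rcases val_cases y with h | h <;> omega

/-- Full decomposition of a nonempty closed path. -/
lemma closed_decomp {l : L} (hNN : ∀ k, 0 ≤ wsum (l.take k)) (h0 : wsum l = 0)
    (hne : l ≠ []) :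
    ∃ q X s, l = .up :: (q ++ X :: s) ∧ X.val = -1 ∧
      wsum q = 0 ∧ (∀ k, 0 ≤ wsum (q.take k)) ∧
      wsum s = 0 ∧ (∀ k, 0 ≤ wsum (s.take k)) := by
  match l with
  | [] => exact absurd rfl hne
  | a :: m =>
    have ha : a = .up := NN_head hNN a (by simp)
    subst ha
    have hm : wsum m < 0 := by
      by_contra h
      push_neg at h
      rw [wsum_cons, show SkewStep.val .up = 1 from rfl] at h0
      omega
    obtain ⟨q, X, s, rfl, hq0, hqNN, hX⟩ := split_neg m.length m le_rfl hm
    refine ⟨q, X, s, rfl, hX, hq0, hqNN, ?_, ?_⟩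
    · rw [wsum_cons, wsum_append, wsum_cons, hq0, hX,
        show SkewStep.val .up = 1 from rfl] at h0
      omega
    · intro k
      have h2 := hNN (q.length + 2 + k)
      have hrw : SkewStep.up :: (q ++ X :: s) = (.up :: q ++ [X]) ++ s := by simp
      rw [hrw, wsum_take_append,
        wsum_take_of_le (by
          simp only [List.length_append, List.length_cons, List.length_nil]
          omega : (SkewStep.up :: q ++ [X]).length ≤ q.length + 2 + k)]
        at h2
      have h3 : wsum (SkewStep.up :: q ++ [X]) = 0 := by
        rw [wsum_append, wsum_cons, wsum_cons, hq0, hX,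
          show wsum ([] : L) = 0 from rfl, show SkewStep.val .up = 1 from rfl]
        ring
      rw [h3, zero_add] at h2
      have hlen : (SkewStep.up :: q ++ [X]).length = q.length + 2 := by simp
      rw [hlen] at h2
      simpa using h2

/-- Gluing preserves nonnegativity of prefix sums. -/
lemma NN_glue {q s : L} {x : SkewStep} (hx : x.val = -1) (hq0 : wsum q = 0)
    (hqNN : ∀ k, 0 ≤ wsum (q.take k)) (hsNN : ∀ k, 0 ≤ wsum (s.take k)) :
    ∀ k, 0 ≤ wsum ((SkewStep.up :: (q ++ x :: s)).take k) := by
  intro k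
  match k with
  | 0 => simp [wsum]
  | j + 1 =>
    rw [List.take_succ_cons, wsum_cons, wsum_take_append,
      show SkewStep.val .up = 1 from rfl]
    have h2 := hqNN j
    rcases le_or_gt j q.length with hj | hj
    · rw [Nat.sub_eq_zero_of_le hj, List.take_zero, show wsum ([] : L) = 0 from rfl]
      omega
    · obtain ⟨i, hi⟩ : ∃ i, j - q.length = i + 1 := ⟨j - q.length - 1, by omega⟩
      rw [hi, List.take_succ_cons, wsum_cons, hx, List.take_of_length_le hj.le, hq0]
      have := hsNN i
      omega

/-- Injectivity auxiliary: a closed positive-prefix block followed by a down-type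
step cannot be a proper prefix of another one. -/
lemma inj_aux {q s q' s' : L} {x x' : SkewStep} (hx : x.val = -1) (hq0 : wsum q = 0)
    (hq'NN : ∀ k, 0 ≤ wsum (q'.take k)) (hlt : q.length < q'.length)
    (h : q ++ x :: s = q' ++ x' :: s') : False := by
  have h1 := congrArg (List.take (q.length + 1)) h
  rw [List.take_append, List.take_of_length_le (by omega),
    Nat.add_sub_cancel_left, List.take_succ_cons, List.take_zero,
    List.take_append, Nat.sub_eq_zero_of_le (by omega),
    List.take_zero, List.append_nil] at h1
  have h2 := hq'NN (q.length + 1)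
  rw [← h1, wsum_append, hq0, wsum_cons, hx, show wsum ([] : L) = 0 from rfl] at h2
  omega

/-- Injectivity auxiliary for the open-ended decomposition. -/
lemma inj_aux_pos {q s q' s' : L} (hq0 : wsum q = 0) (hq'0 : wsum q' = 0)
    (hsNN : ∀ k, 0 ≤ wsum (s.take k)) (hlt : q.length < q'.length)
    (h : q ++ .up :: s = q' ++ .up :: s') : False := by
  -- q' = q ++ up :: t,  s = t ++ up :: s',  wsum t = -1  contradicts hsNN
  have h1 := congrArg (List.take (q.length + 1)) h
  rw [List.take_append, List.take_of_length_le (by omega),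
    Nat.add_sub_cancel_left, List.take_succ_cons, List.take_zero,
    List.take_append, Nat.sub_eq_zero_of_le (by omega),
    List.take_zero, List.append_nil] at h1
  have h2 := congrArg (List.drop (q.length + 1)) h
  rw [List.drop_append, List.drop_of_length_le (by omega),
    Nat.add_sub_cancel_left, List.drop_succ_cons, List.drop_zero, List.nil_append,
    List.drop_append, Nat.sub_eq_zero_of_le (by omega),
    List.drop_zero] at h2
  set t := q'.drop (q.length + 1) with htdef
  have h3 : wsum t = -1 := by
    have h4 : wsum q' = wsum (q'.take (q.length + 1)) + wsum t := by
      rw [← wsum_append, List.take_append_drop]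
    rw [← h1, wsum_append, hq0, wsum_cons, show wsum ([] : L) = 0 from rfl,
      show SkewStep.val .up = 1 from rfl, hq'0] at h4
    omega
  have h5 := hsNN t.length
  rw [h2, List.take_append, List.take_of_length_le le_rfl,
    Nat.sub_self, List.take_zero, wsum_append, show wsum ([] : L) = 0 from rfl] at h5
  omega


/-! ### Small helper lemmas -/

lemma wsum_nonneg {l : L} (hNN : ∀ k, 0 ≤ wsum (l.take k)) : 0 ≤ wsum l := by
  have := hNN l.length; rwa [List.take_length] at this

lemma val_neg_cases {x : SkewStep} (h : x.val = -1) : x = .down ∨ x = .red := by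
  cases x <;> simp_all [SkewStep.val]

lemma getLast?_glue (q s : L) (x : SkewStep) :
    (SkewStep.up :: (q ++ x :: s)).getLast? = (x :: s).getLast? := by
  rw [show SkewStep.up :: (q ++ x :: s) = (SkewStep.up :: q) ++ x :: s by simp,
    List.getLast?_append_cons]

lemma skew_nil : IsSkewPrefix ([] : L) :=
  ⟨List.isChain_nil, fun k => by simp [wsum]⟩

/-- chain' for the glued closed path. -/
lemma chain'_glue {q s : L} {x : SkewStep}
    (hcq : q.Chain' SkewStep.ok) (hcs : s.Chain' SkewStep.ok)
    (hqNN : ∀ k, 0 ≤ wsum (q.take k))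
    (hjunc : ∀ z ∈ q.getLast?, SkewStep.ok z x)
    (hjunc2 : ∀ z ∈ s.head?, SkewStep.ok x z)
    (hqhead : ∀ z ∈ q.head?, SkewStep.ok .up z)
    (hxup : q = [] → SkewStep.ok .up x) :
    (SkewStep.up :: (q ++ x :: s)).Chain' SkewStep.ok := by
  rw [List.Chain', List.isChain_cons]
  constructor
  · intro y hy
    cases q with
    | nil =>
      simp only [List.nil_append, List.head?_cons, Option.mem_def, Option.some.injEq] at hy
      subst hy
      exact hxup rfl
    | cons a q' =>
      simp only [List.cons_append, List.head?_cons, Option.mem_def, Option.some.injEq] at hy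
      subst hy
      exact hqhead a (by simp)
  · rw [List.isChain_append]
    refine ⟨hcq, ?_, ?_⟩
    · rw [List.isChain_cons]
      exact ⟨hjunc2, hcs⟩
    · intro z hz y hy
      simp only [List.head?_cons, Option.mem_def, Option.some.injEq] at hy
      subst hy
      exact hjunc z hz

/-! ### The four counting identities -/

lemma cnt_m_split (n : ℕ) : cnt Pm n = cnt Pt n + cnt Pr n := by
  classical
  rw [cnt, cnt, cnt, ← Nat.card_sum]
  apply Nat.card_congr
  apply Equiv.symm
  refine Equiv.ofBijective
    (Sum.elim (fun a => ⟨a.1, a.2.1, a.2.2.1⟩) (fun a => ⟨a.1, a.2.1, a.2.2.1⟩)) ⟨?_, ?_⟩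
  · rintro (⟨a, ha⟩ | ⟨a, ha⟩) (⟨b, hb⟩ | ⟨b, hb⟩) h <;>
      simp only [Sum.elim_inl, Sum.elim_inr, Subtype.mk.injEq] at h
    · exact congrArg Sum.inl (Subtype.ext h)
    · exact absurd (h ▸ hb.2.2) ha.2.2
    · exact absurd (h.symm ▸ ha.2.2) hb.2.2
    · exact congrArg Sum.inr (Subtype.ext h)
  · rintro ⟨a, ha1, ha2⟩
    by_cases h : a.getLast? = some .red
    · exact ⟨Sum.inr ⟨a, ha1, ha2, h⟩, rfl⟩
    · exact ⟨Sum.inl ⟨a, ha1, ha2, h⟩, rfl⟩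

lemma cnt_f_split (n : ℕ) : cnt IsSkewPrefix n = cnt Pm n + cnt Pg n := by
  classical
  rw [cnt, cnt, cnt, ← Nat.card_sum]
  apply Nat.card_congr
  apply Equiv.symm
  refine Equiv.ofBijective
    (Sum.elim (fun a => ⟨a.1, a.2.1, a.2.2.1⟩) (fun a => ⟨a.1, a.2.1, a.2.2.1⟩)) ⟨?_, ?_⟩
  · rintro (⟨a, ha⟩ | ⟨a, ha⟩) (⟨b, hb⟩ | ⟨b, hb⟩) h <;>
      simp only [Sum.elim_inl, Sum.elim_inr, Subtype.mk.injEq] at h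
    · exact congrArg Sum.inl (Subtype.ext h)
    · exact absurd (h ▸ hb.2.2) (not_not.2 ha.2.2)
    · exact absurd (h ▸ ha.2.2) (not_not.2 (h ▸ hb.2.2))
    · exact congrArg Sum.inr (Subtype.ext h)
  · rintro ⟨a, ha1, ha2⟩
    by_cases h : wsum a = 0
    · exact ⟨Sum.inl ⟨a, ha1, ha2, h⟩, rfl⟩
    · exact ⟨Sum.inr ⟨a, ha1, ha2, h⟩, rfl⟩

lemma cnt_mne_succ (n : ℕ) : cnt Pmne (n + 1) = cnt Pm (n + 1) := by
  apply Nat.card_congr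
  apply Equiv.subtypeEquivRight
  intro l
  constructor
  · rintro ⟨h1, h2, _⟩; exact ⟨h1, h2⟩
  · rintro ⟨h1, h2⟩
    exact ⟨h1, h2, by intro h; rw [h] at h1; simp at h1⟩

lemma cnt_mne_zero : cnt Pmne 0 = 0 := by
  have : IsEmpty {l : L // l.length = 0 ∧ Pmne l} :=
    ⟨fun x => x.2.2.2 (List.length_eq_zero_iff.1 x.2.1)⟩
  exact Nat.card_of_isEmpty

lemma cnt_f_zero : cnt IsSkewPrefix 0 = 1 :=
  Nat.card_eq_one_iff_exists.2 ⟨⟨[], rfl, skew_nil⟩,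
    fun y => Subtype.ext (List.length_eq_zero_iff.1 y.2.1)⟩

lemma cnt_m_zero : cnt Pm 0 = 1 :=
  Nat.card_eq_one_iff_exists.2 ⟨⟨[], rfl, skew_nil, rfl⟩,
    fun y => Subtype.ext (List.length_eq_zero_iff.1 y.2.1)⟩

lemma cnt_t_zero : cnt Pt 0 = 1 :=
  Nat.card_eq_one_iff_exists.2 ⟨⟨[], rfl, ⟨skew_nil, rfl⟩, by simp⟩,
    fun y => Subtype.ext (List.length_eq_zero_iff.1 y.2.1)⟩

lemma cnt_g_zero : cnt Pg 0 = 0 := by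
  have : IsEmpty {l : L // l.length = 0 ∧ Pg l} :=
    ⟨fun x => by
      have := List.length_eq_zero_iff.1 x.2.1
      exact x.2.2.2 (by rw [this]; rfl)⟩
  exact Nat.card_of_isEmpty

lemma cnt_m_one : cnt Pm 1 = 0 := by
  have : IsEmpty {l : L // l.length = 1 ∧ Pm l} := by
    refine ⟨fun x => ?_⟩
    obtain ⟨l, hl, hm⟩ := x
    obtain ⟨a, rfl⟩ := List.length_eq_one_iff.1 hl
    have h0 := hm.2
    rcases val_cases a with h | h <;> simp [wsum, h] at h0
  exact Nat.card_of_isEmpty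

lemma cnt_t_one : cnt Pt 1 = 0 := by
  have := cnt_m_split 1
  rw [cnt_m_one] at this
  omega

lemma cnt_r_one : cnt Pr 1 = 0 := by
  have := cnt_m_split 1
  rw [cnt_m_one] at this
  omega

lemma cnt_r_zero : cnt Pr 0 = 0 := by
  have : IsEmpty {l : L // l.length = 0 ∧ Pr l} :=
    ⟨fun x => by
      have h := List.length_eq_zero_iff.1 x.2.1
      have := x.2.2.2
      rw [h] at this
      simp at this⟩
  exact Nat.card_of_isEmpty


lemma glue_len (q s : L) (x : SkewStep) :
    (SkewStep.up :: (q ++ x :: s)).length = q.length + s.length + 2 := by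
  simp only [List.length_cons, List.length_append]; omega

lemma glue_m {q s : L} {x : SkewStep} (hxv : x.val = -1) (hxup : q = [] → SkewStep.ok .up x)
    (hq : Pm q) (hs : Pm s) (hjunc : ∀ z ∈ q.getLast?, SkewStep.ok z x)
    (hjunc2 : ∀ z ∈ s.head?, SkewStep.ok x z) :
    Pm (SkewStep.up :: (q ++ x :: s)) := by
  obtain ⟨⟨hcq, hqNN⟩, hq0⟩ := hq
  obtain ⟨⟨hcs, hsNN⟩, hs0⟩ := hs
  refine ⟨⟨?_, ?_⟩, ?_⟩
  · exact chain'_glue hcq hcs hqNN hjunc hjunc2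
      (fun z hz => by rw [NN_head hqNN z hz]; exact ok_up_up) hxup
  · exact NN_glue hxv hq0 hqNN hsNN
  · rw [wsum_cons, wsum_append, wsum_cons, hq0, hs0, hxv]
    simp [SkewStep.val]

lemma glue_t {q s : L} (hq : Pm q) (hs : Pt s) :
    Pt (SkewStep.up :: (q ++ SkewStep.down :: s)) := by
  refine ⟨glue_m rfl (fun _ => by simp [SkewStep.ok]) hq hs.1
    (fun z _ => ok_right_down z) (fun z _ => ok_down_left z), ?_⟩
  rw [getLast?_glue]
  cases s with
  | nil => simp
  | cons b t =>
    rw [List.getLast?_cons_cons]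
    exact hs.2

lemma cnt_t_rec (n : ℕ) :
    cnt Pt (n + 2) = ∑ ab ∈ Finset.HasAntidiagonal.antidiagonal n, cnt Pm ab.1 * cnt Pt ab.2 := by
  rw [cnt, ← card_pairs]
  apply Nat.card_congr
  apply Equiv.symm
  refine Equiv.ofBijective (fun p =>
    ⟨.up :: (p.1.1 ++ .down :: p.1.2),
      by rw [glue_len]; have := p.2.1; omega,
      glue_t p.2.2.1 p.2.2.2⟩) ⟨?_, ?_⟩
  · rintro ⟨⟨q, s⟩, hlen, hq, hs⟩ ⟨⟨q', s'⟩, hlen', hq', hs'⟩ h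
    simp only [Subtype.mk.injEq, List.cons.injEq, true_and] at h
    rcases lt_trichotomy q.length q'.length with hlt | heq | hgt
    · exact (inj_aux (by rfl) hq.2 hq'.1.2 hlt h).elim
    · obtain ⟨rfl, h2⟩ := List.append_inj h heq
      obtain rfl : s = s' := by simpa using h2
      rfl
    · exact (inj_aux (by rfl) hq'.2 hq.1.2 hgt h.symm).elim
  · rintro ⟨l, hlen, ⟨⟨hc, hNN⟩, h0⟩, hlast⟩
    have hne : l ≠ [] := by intro h; rw [h] at hlen; simp at hlen
    obtain ⟨q, X, s, rfl, hX, hq0, hqNN, hs0, hsNN⟩ := closed_decomp hNN h0 hne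
    rw [List.Chain', List.isChain_cons] at hc
    obtain ⟨hhead, hc2⟩ := hc
    rw [List.isChain_append] at hc2
    obtain ⟨hcq, hcXs, hjunc⟩ := hc2
    rw [List.isChain_cons] at hcXs
    obtain ⟨hjunc2, hcs⟩ := hcXs
    rcases val_neg_cases hX with rfl | rfl
    · have hlens : q.length + s.length = n := by
        rw [glue_len] at hlen; omega
      have hslast : s.getLast? ≠ some SkewStep.red := by
        rw [getLast?_glue] at hlast
        cases s with
        | nil => simp
        | cons b t => rw [List.getLast?_cons_cons] at hlast; exact hlast
      exact ⟨⟨(q, s), hlens, ⟨⟨hcq, hqNN⟩, hq0⟩, ⟨⟨⟨hcs, hsNN⟩, hs0⟩, hslast⟩⟩, rfl⟩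
    · exfalso
      have hsnil : s = [] := by
        cases s with
        | nil => rfl
        | cons b t =>
          have hb : b = .up := NN_head hsNN b (by simp)
          have h2 := hjunc2 b (by simp)
          rw [hb] at h2
          exact absurd h2 (by simp [SkewStep.ok])
      subst hsnil
      rw [getLast?_glue] at hlast
      simp at hlast


lemma glue_r2 {q s : L} (hq : Pm q) (hs : Pr s) :
    Pr (SkewStep.up :: (q ++ SkewStep.down :: s)) := by
  refine ⟨glue_m rfl (fun _ => by simp [SkewStep.ok]) hq hs.1
    (fun z _ => ok_right_down z) (fun z _ => ok_down_left z), ?_⟩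
  rw [getLast?_glue]
  cases s with
  | nil => exact absurd hs.2 (by simp)
  | cons b t =>
    rw [List.getLast?_cons_cons]
    exact hs.2

lemma glue_r1 {q : L} (hq : Pmne q) :
    Pr (SkewStep.up :: (q ++ [SkewStep.red])) := by
  obtain ⟨⟨⟨hcq, hqNN⟩, hq0⟩, hqne⟩ := hq
  refine ⟨glue_m rfl (fun h => absurd h hqne) ⟨⟨hcq, hqNN⟩, hq0⟩ ⟨skew_nil, rfl⟩
    ?_ (by simp), ?_⟩
  · intro z hz
    rw [ok_iff_red]
    intro hzu
    have := closed_last hqNN hq0 z hz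
    rw [hzu] at this
    simp [SkewStep.val] at this
  · rw [getLast?_glue]
    simp

lemma cnt_r_rec (n : ℕ) :
    cnt Pr (n + 2) = cnt Pmne n + ∑ ab ∈ Finset.HasAntidiagonal.antidiagonal n, cnt Pm ab.1 * cnt Pr ab.2 := by
  rw [cnt, cnt, ← card_pairs, ← Nat.card_sum]
  apply Nat.card_congr
  apply Equiv.symm
  refine Equiv.ofBijective (Sum.elim
    (fun a => ⟨.up :: (a.1 ++ [.red]), by rw [glue_len]; have := a.2.1; simp; omega,
      glue_r1 a.2.2⟩)
    (fun p => ⟨.up :: (p.1.1 ++ .down :: p.1.2), by rw [glue_len]; have := p.2.1; omega,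
      glue_r2 p.2.2.1 p.2.2.2⟩)) ⟨?_, ?_⟩
  · rintro (⟨q, hlen, hq⟩ | ⟨⟨q, s⟩, hlen, hq, hs⟩)
      (⟨q', hlen', hq'⟩ | ⟨⟨q', s'⟩, hlen', hq', hs'⟩) h <;>
      simp only [Sum.elim_inl, Sum.elim_inr, Subtype.mk.injEq, List.cons.injEq,
        true_and] at h
    · rcases lt_trichotomy q.length q'.length with hlt | heq | hgt
      · exact (inj_aux (by rfl) hq.1.2 hq'.1.1.2 hlt h).elim
      · obtain ⟨rfl, -⟩ := List.append_inj h heq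
        rfl
      · exact (inj_aux (by rfl) hq'.1.2 hq.1.1.2 hgt h.symm).elim
    · rcases lt_trichotomy q.length q'.length with hlt | heq | hgt
      · exact (inj_aux (by rfl) hq.1.2 hq'.1.2 hlt h).elim
      · obtain ⟨-, h2⟩ := List.append_inj h heq
        simp at h2
      · exact (inj_aux (by rfl) hq'.2 hq.1.1.2 hgt h.symm).elim
    · rcases lt_trichotomy q.length q'.length with hlt | heq | hgt
      · exact (inj_aux (by rfl) hq.2 hq'.1.1.2 hlt h).elim
      · obtain ⟨-, h2⟩ := List.append_inj h heq
        simp at h2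
      · exact (inj_aux (by rfl) hq'.1.2 hq.1.2 hgt h.symm).elim
    · rcases lt_trichotomy q.length q'.length with hlt | heq | hgt
      · exact (inj_aux (by rfl) hq.2 hq'.1.2 hlt h).elim
      · obtain ⟨rfl, h2⟩ := List.append_inj h heq
        obtain rfl : s = s' := by simpa using h2
        rfl
      · exact (inj_aux (by rfl) hq'.2 hq.1.2 hgt h.symm).elim
  · rintro ⟨l, hlen, ⟨⟨hc, hNN⟩, h0⟩, hlast⟩
    have hne : l ≠ [] := by intro h; rw [h] at hlen; simp at hlen
    obtain ⟨q, X, s, rfl, hX, hq0, hqNN, hs0, hsNN⟩ := closed_decomp hNN h0 hne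
    rw [List.Chain', List.isChain_cons] at hc
    obtain ⟨hhead, hc2⟩ := hc
    rw [List.isChain_append] at hc2
    obtain ⟨hcq, hcXs, hjunc⟩ := hc2
    rw [List.isChain_cons] at hcXs
    obtain ⟨hjunc2, hcs⟩ := hcXs
    rcases val_neg_cases hX with rfl | rfl
    · -- X = down : second branch
      rw [getLast?_glue] at hlast
      cases s with
      | nil => simp at hlast
      | cons b t =>
        rw [List.getLast?_cons_cons] at hlast
        have hlens : q.length + (b :: t).length = n := by
          rw [glue_len] at hlen
          simp only [List.length_cons] at *
          omega
        exact ⟨Sum.inr ⟨(q, b :: t), hlens, ⟨⟨hcq, hqNN⟩, hq0⟩,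
          ⟨⟨⟨hcs, hsNN⟩, hs0⟩, hlast⟩⟩, rfl⟩
    · -- X = red : first branch
      have hsnil : s = [] := by
        cases s with
        | nil => rfl
        | cons b t =>
          have hb : b = .up := NN_head hsNN b (by simp)
          have h2 := hjunc2 b (by simp)
          rw [hb] at h2
          exact absurd h2 (by simp [SkewStep.ok])
      subst hsnil
      have hqne : q ≠ [] := by
        rintro rfl
        have h2 := hhead .red (by simp)
        exact absurd h2 (by simp [SkewStep.ok])
      have hlens : q.length = n := by
        rw [glue_len] at hlen; simpa using hlen
      exact ⟨Sum.inl ⟨q, hlens, ⟨⟨hcq, hqNN⟩, hq0⟩, hqne⟩, rfl⟩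

lemma glue_g {q s : L} (hq : Pt q) (hs : IsSkewPrefix s) :
    Pg (q ++ SkewStep.up :: s) := by
  obtain ⟨⟨⟨hcq, hqNN⟩, hq0⟩, hqlast⟩ := hq
  obtain ⟨hcs, hsNN⟩ := hs
  refine ⟨⟨?_, ?_⟩, ?_⟩
  · rw [List.Chain', List.isChain_append]
    refine ⟨hcq, ?_, ?_⟩
    · rw [List.isChain_cons]
      exact ⟨fun z hz => by rw [NN_head hsNN z hz]; exact ok_up_up, hcs⟩
    · intro z hz y hy
      simp only [List.head?_cons, Option.mem_def, Option.some.injEq] at hy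
      subst hy
      rw [ok_iff_up]
      intro hzr
      rw [hzr] at hz
      exact hqlast hz
  · show ∀ k, 0 ≤ wsum ((q ++ SkewStep.up :: s).take k)
    intro k
    rw [wsum_take_append]
    have h1 : 0 ≤ wsum (q.take k) := hqNN k
    have h2 : 0 ≤ wsum ((SkewStep.up :: s).take (k - q.length)) := by
      match hk : k - q.length with
      | 0 => simp [wsum]
      | j + 1 =>
        rw [List.take_succ_cons, wsum_cons, show SkewStep.val .up = 1 from rfl]
        have h3 : 0 ≤ wsum (s.take j) := hsNN j
        omega
    omega
  · rw [wsum_append, wsum_cons, hq0, show SkewStep.val .up = 1 from rfl]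
    have := wsum_nonneg hsNN
    omega

lemma cnt_g_rec (n : ℕ) :
    cnt Pg (n + 1) = ∑ ab ∈ Finset.HasAntidiagonal.antidiagonal n, cnt Pt ab.1 * cnt IsSkewPrefix ab.2 := by
  rw [cnt, ← card_pairs]
  apply Nat.card_congr
  apply Equiv.symm
  refine Equiv.ofBijective (fun p =>
    ⟨p.1.1 ++ .up :: p.1.2, by
      have := p.2.1
      simp only [List.length_append, List.length_cons]; omega,
      glue_g p.2.2.1 p.2.2.2⟩) ⟨?_, ?_⟩
  · rintro ⟨⟨q, s⟩, hlen, hq, hs⟩ ⟨⟨q', s'⟩, hlen', hq', hs'⟩ h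
    simp only [Subtype.mk.injEq] at h
    rcases lt_trichotomy q.length q'.length with hlt | heq | hgt
    · exact (inj_aux_pos hq.1.2 hq'.1.2 hs.2 hlt h).elim
    · obtain ⟨rfl, h2⟩ := List.append_inj h heq
      obtain rfl : s = s' := by simpa using h2
      rfl
    · exact (inj_aux_pos hq'.1.2 hq.1.2 hs'.2 hgt h.symm).elim
  · rintro ⟨l, hlen, ⟨hc, hNN⟩, hne0⟩
    have hpos : 0 < wsum l := lt_of_le_of_ne (wsum_nonneg hNN) (Ne.symm hne0)
    obtain ⟨q, s, rfl, hq0, hsNN⟩ := split_pos l.length l le_rfl hNN hpos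
    have hqNN : ∀ k, 0 ≤ wsum (q.take k) := NN_prefix hNN
    rw [List.Chain', List.isChain_append] at hc
    obtain ⟨hcq, hcUps, hjunc⟩ := hc
    rw [List.isChain_cons] at hcUps
    obtain ⟨-, hcs⟩ := hcUps
    have hqlast : q.getLast? ≠ some .red := by
      intro hcontra
      have h2 := hjunc .red (by rw [hcontra]; rfl) .up rfl
      exact absurd h2 (by simp [SkewStep.ok])
    have hlens : q.length + s.length = n := by
      simp only [List.length_append, List.length_cons] at hlen; omega
    exact ⟨⟨(q, s), hlens, ⟨⟨⟨hcq, hqNN⟩, hq0⟩, hqlast⟩, ⟨hcs, hsNN⟩⟩, rfl⟩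


/-! ### Numeric values -/

lemma mv0 : cnt Pm 0 = 1 := cnt_m_zero
lemma mv1 : cnt Pm 1 = 0 := cnt_m_one
lemma tv0 : cnt Pt 0 = 1 := cnt_t_zero
lemma tv1 : cnt Pt 1 = 0 := cnt_t_one
lemma rv0 : cnt Pr 0 = 0 := cnt_r_zero
lemma rv1 : cnt Pr 1 = 0 := cnt_r_one
lemma fv0 : cnt IsSkewPrefix 0 = 1 := cnt_f_zero
lemma gv0 : cnt Pg 0 = 0 := cnt_g_zero
lemma mnev0 : cnt Pmne 0 = 0 := cnt_mne_zero

lemma gv1 : cnt Pg 1 = 1 := by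
  have h := cnt_g_rec 0
  rw [Finset.Nat.sum_antidiagonal_eq_sum_range_succ_mk] at h
  simp [Finset.sum_range_succ, tv0, fv0] at h
  simpa using h

lemma fv1 : cnt IsSkewPrefix 1 = 1 := by
  rw [cnt_f_split 1, mv1, gv1]

lemma tv2 : cnt Pt 2 = 1 := by
  have h := cnt_t_rec 0
  rw [Finset.Nat.sum_antidiagonal_eq_sum_range_succ_mk] at h
  simp [Finset.sum_range_succ, mv0, tv0] at h
  simpa using h

lemma rv2 : cnt Pr 2 = 0 := by
  have h := cnt_r_rec 0
  rw [Finset.Nat.sum_antidiagonal_eq_sum_range_succ_mk] at h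
  simp [Finset.sum_range_succ, mnev0, mv0, rv0] at h
  simpa using h

lemma mv2 : cnt Pm 2 = 1 := by
  rw [cnt_m_split 2, tv2, rv2]

lemma gv2 : cnt Pg 2 = 1 := by
  have h := cnt_g_rec 1
  rw [Finset.Nat.sum_antidiagonal_eq_sum_range_succ_mk] at h
  simp [Finset.sum_range_succ, tv0, tv1, fv0, fv1] at h
  simpa using h

lemma fv2 : cnt IsSkewPrefix 2 = 2 := by
  rw [cnt_f_split 2, mv2, gv2]

lemma mnev1 : cnt Pmne 1 = 0 := by
  have h := cnt_mne_succ 0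
  norm_num at h
  rw [h]
  exact mv1

lemma tv3 : cnt Pt 3 = 0 := by
  have h := cnt_t_rec 1
  rw [Finset.Nat.sum_antidiagonal_eq_sum_range_succ_mk] at h
  simp [Finset.sum_range_succ, mv0, mv1, tv0, tv1] at h
  simpa using h

lemma rv3 : cnt Pr 3 = 0 := by
  have h := cnt_r_rec 1
  rw [Finset.Nat.sum_antidiagonal_eq_sum_range_succ_mk] at h
  simp [Finset.sum_range_succ, mnev1, mv0, mv1, rv0, rv1] at h
  simpa using h

lemma mv3 : cnt Pm 3 = 0 := by
  rw [cnt_m_split 3, tv3, rv3]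

lemma gv3 : cnt Pg 3 = 3 := by
  have h := cnt_g_rec 2
  rw [Finset.Nat.sum_antidiagonal_eq_sum_range_succ_mk] at h
  simp [Finset.sum_range_succ, tv0, tv1, tv2, fv0, fv1, fv2] at h
  simpa using h

lemma fv3 : cnt IsSkewPrefix 3 = 3 := by
  rw [cnt_f_split 3, mv3, gv3]

lemma mnev2 : cnt Pmne 2 = 1 := by
  have h := cnt_mne_succ 1
  norm_num at h
  rw [h]
  exact mv2

lemma tv4 : cnt Pt 4 = 2 := by
  have h := cnt_t_rec 2
  rw [Finset.Nat.sum_antidiagonal_eq_sum_range_succ_mk] at h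
  simp [Finset.sum_range_succ, mv0, mv1, mv2, tv0, tv1, tv2] at h
  simpa using h

lemma rv4 : cnt Pr 4 = 1 := by
  have h := cnt_r_rec 2
  rw [Finset.Nat.sum_antidiagonal_eq_sum_range_succ_mk] at h
  simp [Finset.sum_range_succ, mnev2, mv0, mv1, mv2, rv0, rv1, rv2] at h
  simpa using h

lemma mv4 : cnt Pm 4 = 3 := by
  rw [cnt_m_split 4, tv4, rv4]

lemma gv4 : cnt Pg 4 = 4 := by
  have h := cnt_g_rec 3
  rw [Finset.Nat.sum_antidiagonal_eq_sum_range_succ_mk] at h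
  simp [Finset.sum_range_succ, tv0, tv1, tv2, tv3, fv0, fv1, fv2, fv3] at h
  simpa using h

lemma fv4 : cnt IsSkewPrefix 4 = 7 := by
  rw [cnt_f_split 4, mv4, gv4]

lemma mnev3 : cnt Pmne 3 = 0 := by
  have h := cnt_mne_succ 2
  norm_num at h
  rw [h]
  exact mv3

lemma tv5 : cnt Pt 5 = 0 := by
  have h := cnt_t_rec 3
  rw [Finset.Nat.sum_antidiagonal_eq_sum_range_succ_mk] at h
  simp [Finset.sum_range_succ, mv0, mv1, mv2, mv3, tv0, tv1, tv2, tv3] at h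
  simpa using h

lemma rv5 : cnt Pr 5 = 0 := by
  have h := cnt_r_rec 3
  rw [Finset.Nat.sum_antidiagonal_eq_sum_range_succ_mk] at h
  simp [Finset.sum_range_succ, mnev3, mv0, mv1, mv2, mv3, rv0, rv1, rv2, rv3] at h
  simpa using h

lemma mv5 : cnt Pm 5 = 0 := by
  rw [cnt_m_split 5, tv5, rv5]

lemma gv5 : cnt Pg 5 = 11 := by
  have h := cnt_g_rec 4
  rw [Finset.Nat.sum_antidiagonal_eq_sum_range_succ_mk] at h
  simp [Finset.sum_range_succ, tv0, tv1, tv2, tv3, tv4, fv0, fv1, fv2, fv3, fv4] at h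
  simpa using h

lemma fv5 : cnt IsSkewPrefix 5 = 11 := by
  rw [cnt_f_split 5, mv5, gv5]

lemma mnev4 : cnt Pmne 4 = 3 := by
  have h := cnt_mne_succ 3
  norm_num at h
  rw [h]
  exact mv4

lemma tv6 : cnt Pt 6 = 6 := by
  have h := cnt_t_rec 4
  rw [Finset.Nat.sum_antidiagonal_eq_sum_range_succ_mk] at h
  simp [Finset.sum_range_succ, mv0, mv1, mv2, mv3, mv4, tv0, tv1, tv2, tv3, tv4] at h
  simpa using h

lemma rv6 : cnt Pr 6 = 4 := by
  have h := cnt_r_rec 4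
  rw [Finset.Nat.sum_antidiagonal_eq_sum_range_succ_mk] at h
  simp [Finset.sum_range_succ, mnev4, mv0, mv1, mv2, mv3, mv4, rv0, rv1, rv2, rv3, rv4] at h
  simpa using h

lemma mv6 : cnt Pm 6 = 10 := by
  rw [cnt_m_split 6, tv6, rv6]

lemma gv6 : cnt Pg 6 = 16 := by
  have h := cnt_g_rec 5
  rw [Finset.Nat.sum_antidiagonal_eq_sum_range_succ_mk] at h
  simp [Finset.sum_range_succ, tv0, tv1, tv2, tv3, tv4, tv5, fv0, fv1, fv2, fv3, fv4, fv5] at h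
  simpa using h

lemma fv6 : cnt IsSkewPrefix 6 = 26 := by
  rw [cnt_f_split 6, mv6, gv6]

lemma mnev5 : cnt Pmne 5 = 0 := by
  have h := cnt_mne_succ 4
  norm_num at h
  rw [h]
  exact mv5

lemma tv7 : cnt Pt 7 = 0 := by
  have h := cnt_t_rec 5
  rw [Finset.Nat.sum_antidiagonal_eq_sum_range_succ_mk] at h
  simp [Finset.sum_range_succ, mv0, mv1, mv2, mv3, mv4, mv5, tv0, tv1, tv2, tv3, tv4, tv5] at h
  simpa using h

lemma rv7 : cnt Pr 7 = 0 := by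
  have h := cnt_r_rec 5
  rw [Finset.Nat.sum_antidiagonal_eq_sum_range_succ_mk] at h
  simp [Finset.sum_range_succ, mnev5, mv0, mv1, mv2, mv3, mv4, mv5, rv0, rv1, rv2, rv3, rv4, rv5] at h
  simpa using h

lemma mv7 : cnt Pm 7 = 0 := by
  rw [cnt_m_split 7, tv7, rv7]

lemma gv7 : cnt Pg 7 = 43 := by
  have h := cnt_g_rec 6
  rw [Finset.Nat.sum_antidiagonal_eq_sum_range_succ_mk] at h
  simp [Finset.sum_range_succ, tv0, tv1, tv2, tv3, tv4, tv5, tv6, fv0, fv1, fv2, fv3, fv4, fv5, fv6] at h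
  simpa using h

lemma fv7 : cnt IsSkewPrefix 7 = 43 := by
  rw [cnt_f_split 7, mv7, gv7]

lemma mnev6 : cnt Pmne 6 = 10 := by
  have h := cnt_mne_succ 5
  norm_num at h
  rw [h]
  exact mv6

lemma tv8 : cnt Pt 8 = 21 := by
  have h := cnt_t_rec 6
  rw [Finset.Nat.sum_antidiagonal_eq_sum_range_succ_mk] at h
  simp [Finset.sum_range_succ, mv0, mv1, mv2, mv3, mv4, mv5, mv6, tv0, tv1, tv2, tv3, tv4, tv5, tv6] at h
  simpa using h

lemma rv8 : cnt Pr 8 = 15 := by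
  have h := cnt_r_rec 6
  rw [Finset.Nat.sum_antidiagonal_eq_sum_range_succ_mk] at h
  simp [Finset.sum_range_succ, mnev6, mv0, mv1, mv2, mv3, mv4, mv5, mv6, rv0, rv1, rv2, rv3, rv4, rv5, rv6] at h
  simpa using h

lemma mv8 : cnt Pm 8 = 36 := by
  rw [cnt_m_split 8, tv8, rv8]

lemma gv8 : cnt Pg 8 = 66 := by
  have h := cnt_g_rec 7
  rw [Finset.Nat.sum_antidiagonal_eq_sum_range_succ_mk] at h
  simp [Finset.sum_range_succ, tv0, tv1, tv2, tv3, tv4, tv5, tv6, tv7, fv0, fv1, fv2, fv3, fv4, fv5, fv6, fv7] at h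
  simpa using h

lemma fv8 : cnt IsSkewPrefix 8 = 102 := by
  rw [cnt_f_split 8, mv8, gv8]

lemma mnev7 : cnt Pmne 7 = 0 := by
  have h := cnt_mne_succ 6
  norm_num at h
  rw [h]
  exact mv7

lemma tv9 : cnt Pt 9 = 0 := by
  have h := cnt_t_rec 7
  rw [Finset.Nat.sum_antidiagonal_eq_sum_range_succ_mk] at h
  simp [Finset.sum_range_succ, mv0, mv1, mv2, mv3, mv4, mv5, mv6, mv7, tv0, tv1, tv2, tv3, tv4, tv5, tv6, tv7] at h
  simpa using h

lemma rv9 : cnt Pr 9 = 0 := by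
  have h := cnt_r_rec 7
  rw [Finset.Nat.sum_antidiagonal_eq_sum_range_succ_mk] at h
  simp [Finset.sum_range_succ, mnev7, mv0, mv1, mv2, mv3, mv4, mv5, mv6, mv7, rv0, rv1, rv2, rv3, rv4, rv5, rv6, rv7] at h
  simpa using h

lemma mv9 : cnt Pm 9 = 0 := by
  rw [cnt_m_split 9, tv9, rv9]

lemma gv9 : cnt Pg 9 = 175 := by
  have h := cnt_g_rec 8
  rw [Finset.Nat.sum_antidiagonal_eq_sum_range_succ_mk] at h
  simp [Finset.sum_range_succ, tv0, tv1, tv2, tv3, tv4, tv5, tv6, tv7, tv8, fv0, fv1, fv2, fv3, fv4, fv5, fv6, fv7, fv8] at h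
  simpa using h

lemma fv9 : cnt IsSkewPrefix 9 = 175 := by
  rw [cnt_f_split 9, mv9, gv9]

lemma mnev8 : cnt Pmne 8 = 36 := by
  have h := cnt_mne_succ 7
  norm_num at h
  rw [h]
  exact mv8

lemma tv10 : cnt Pt 10 = 79 := by
  have h := cnt_t_rec 8
  rw [Finset.Nat.sum_antidiagonal_eq_sum_range_succ_mk] at h
  simp [Finset.sum_range_succ, mv0, mv1, mv2, mv3, mv4, mv5, mv6, mv7, mv8, tv0, tv1, tv2, tv3, tv4, tv5, tv6, tv7, tv8] at h
  simpa using h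

lemma rv10 : cnt Pr 10 = 58 := by
  have h := cnt_r_rec 8
  rw [Finset.Nat.sum_antidiagonal_eq_sum_range_succ_mk] at h
  simp [Finset.sum_range_succ, mnev8, mv0, mv1, mv2, mv3, mv4, mv5, mv6, mv7, mv8, rv0, rv1, rv2, rv3, rv4, rv5, rv6, rv7, rv8] at h
  simpa using h

lemma mv10 : cnt Pm 10 = 137 := by
  rw [cnt_m_split 10, tv10, rv10]

lemma gv10 : cnt Pg 10 = 279 := by
  have h := cnt_g_rec 9
  rw [Finset.Nat.sum_antidiagonal_eq_sum_range_succ_mk] at h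
  simp [Finset.sum_range_succ, tv0, tv1, tv2, tv3, tv4, tv5, tv6, tv7, tv8, tv9, fv0, fv1, fv2, fv3, fv4, fv5, fv6, fv7, fv8, fv9] at h
  simpa using h

lemma fv10 : cnt IsSkewPrefix 10 = 416 := by
  rw [cnt_f_split 10, mv10, gv10]


/-! ### Generating functions -/

open PowerSeries

noncomputable def gfF : PowerSeries ℚ := PowerSeries.mk fun n => (cnt IsSkewPrefix n : ℚ)
noncomputable def gfM : PowerSeries ℚ := PowerSeries.mk fun n => (cnt Pm n : ℚ)
noncomputable def gfT : PowerSeries ℚ := PowerSeries.mk fun n => (cnt Pt n : ℚ)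
noncomputable def gfR : PowerSeries ℚ := PowerSeries.mk fun n => (cnt Pr n : ℚ)

lemma coeff_gfF (n : ℕ) : PowerSeries.coeff n gfF = (cnt IsSkewPrefix n : ℚ) :=
  PowerSeries.coeff_mk n _
lemma coeff_gfM (n : ℕ) : PowerSeries.coeff n gfM = (cnt Pm n : ℚ) :=
  PowerSeries.coeff_mk n _
lemma coeff_gfT (n : ℕ) : PowerSeries.coeff n gfT = (cnt Pt n : ℚ) :=
  PowerSeries.coeff_mk n _
lemma coeff_gfR (n : ℕ) : PowerSeries.coeff n gfR = (cnt Pr n : ℚ) :=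
  PowerSeries.coeff_mk n _

lemma hgfT : gfT = 1 + PowerSeries.X ^ 2 * (gfM * gfT) := by
  ext n
  rw [map_add, PowerSeries.coeff_one, coeff_gfT,
    show (PowerSeries.X : ℚ⟦X⟧) ^ 2 * (gfM * gfT) = (gfM * gfT) * PowerSeries.X ^ 2 from by
      ring,
    PowerSeries.coeff_mul_X_pow']
  match n with
  | 0 => simp [cnt_t_zero]
  | 1 => simp [cnt_t_one]
  | n + 2 =>
    rw [if_neg (by omega), if_pos (by omega), zero_add, cnt_t_rec n,
      show n + 2 - 2 = n from rfl, PowerSeries.coeff_mul]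
    push_cast
    refine Finset.sum_congr rfl fun ab _ => ?_
    rw [coeff_gfM, coeff_gfT]

lemma cast_mne (n : ℕ) : (cnt Pmne n : ℚ) = (cnt Pm n : ℚ) - (if n = 0 then 1 else 0) := by
  match n with
  | 0 => rw [cnt_mne_zero, cnt_m_zero]; norm_num
  | n + 1 => rw [cnt_mne_succ, if_neg (by omega), sub_zero]

lemma hgfR : gfR = PowerSeries.X ^ 2 * (gfM - 1) + PowerSeries.X ^ 2 * (gfM * gfR) := by
  ext n
  rw [map_add, coeff_gfR,
    show (PowerSeries.X : ℚ⟦X⟧) ^ 2 * (gfM - 1) = (gfM - 1) * PowerSeries.X ^ 2 from by ring,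
    show (PowerSeries.X : ℚ⟦X⟧) ^ 2 * (gfM * gfR) = (gfM * gfR) * PowerSeries.X ^ 2 from by
      ring,
    PowerSeries.coeff_mul_X_pow', PowerSeries.coeff_mul_X_pow']
  match n with
  | 0 => simp [cnt_r_zero]
  | 1 => simp [cnt_r_one]
  | n + 2 =>
    rw [if_pos (by omega), if_pos (by omega), cnt_r_rec n,
      show n + 2 - 2 = n from rfl, PowerSeries.coeff_mul, map_sub,
      PowerSeries.coeff_one, coeff_gfM, ← cast_mne]
    push_cast
    refine congrArg (fun x => (cnt Pmne n : ℚ) + x) ?_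
    refine Finset.sum_congr rfl fun ab _ => ?_
    rw [coeff_gfM, coeff_gfR]

lemma hgfM : gfM = gfT + gfR := by
  ext n
  rw [map_add, coeff_gfM, coeff_gfT, coeff_gfR, cnt_m_split n]
  push_cast
  ring

lemma hgfF : gfF = gfM + PowerSeries.X * (gfT * gfF) := by
  ext n
  rw [map_add, coeff_gfF, coeff_gfM,
    show (PowerSeries.X : ℚ⟦X⟧) * (gfT * gfF) = (gfT * gfF) * PowerSeries.X ^ 1 from by
      ring,
    PowerSeries.coeff_mul_X_pow']
  match n with
  | 0 =>
    rw [if_neg (by omega), add_zero, cnt_f_zero, cnt_m_zero]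
  | n + 1 =>
    rw [if_pos (by omega), cnt_f_split (n + 1), cnt_g_rec n,
      show n + 1 - 1 = n from rfl, PowerSeries.coeff_mul]
    push_cast
    refine congrArg (fun x => (cnt Pm (n + 1) : ℚ) + x) ?_
    refine Finset.sum_congr rfl fun ab _ => ?_
    rw [coeff_gfT, coeff_gfF]

end Skew

open PowerSeries

/-- The generating function of open ended (partial) skew Dyck paths is
`S(1) = -((z+1)(z²+3z-2)+(z+2)√(1-6z²+5z⁴))/(2z(z²+2z-1))`, with expansion
`1+z+2z²+3z³+7z⁴+11z⁵+26z⁶+43z⁷+102z⁸+175z⁹+416z¹⁰+⋯`. -/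
theorem openEnded_genFun (S1 W : PowerSeries ℚ)
    (hS1 : ∀ n : ℕ, PowerSeries.coeff n S1
        = Nat.card {l : List SkewStep // l.length = n ∧ IsSkewPrefix l})
    (hW : W ^ 2 = 1 - 6 * PowerSeries.X ^ 2 + 5 * PowerSeries.X ^ 4)
    (hW0 : PowerSeries.coeff 0 W = 1) :
    S1 * (2 * PowerSeries.X * (PowerSeries.X ^ 2 + 2 * PowerSeries.X - 1))
      = -((PowerSeries.X + 1) * (PowerSeries.X ^ 2 + 3 * PowerSeries.X - 2)
          + (PowerSeries.X + 2) * W) ∧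
    PowerSeries.coeff 0 S1 = 1 ∧ PowerSeries.coeff 1 S1 = 1 ∧
    PowerSeries.coeff 2 S1 = 2 ∧ PowerSeries.coeff 3 S1 = 3 ∧
    PowerSeries.coeff 4 S1 = 7 ∧ PowerSeries.coeff 5 S1 = 11 ∧
    PowerSeries.coeff 6 S1 = 26 ∧ PowerSeries.coeff 7 S1 = 43 ∧
    PowerSeries.coeff 8 S1 = 102 ∧ PowerSeries.coeff 9 S1 = 175 ∧
    PowerSeries.coeff 10 S1 = 416 := by
  have hT := Skew.hgfT
  have hR := Skew.hgfR
  have hM := Skew.hgfM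
  have hF := Skew.hgfF
  have hS1F : S1 = Skew.gfF := by
    ext n
    rw [hS1 n, Skew.coeff_gfF]
    rfl
  have hVW : W = 1 - X ^ 2 - 2 * X ^ 2 * Skew.gfM := by
    have hsq : ((1 - X ^ 2 - 2 * X ^ 2 * Skew.gfM) - W)
        * ((1 - X ^ 2 - 2 * X ^ 2 * Skew.gfM) + W) = 0 := by
      linear_combination (-4 * (X : ℚ⟦X⟧) ^ 2 * (1 - X ^ 2 * Skew.gfM)) * hM
        + (-4 * (X : ℚ⟦X⟧) ^ 2) * hT + (-4 * (X : ℚ⟦X⟧) ^ 2) * hR - hW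
    rcases mul_eq_zero.1 hsq with h | h
    · linear_combination -h
    · exfalso
      have h0 := congrArg (PowerSeries.coeff 0) h
      simp only [map_add, map_sub, map_mul, map_one, LinearMap.map_zero] at h0
      rw [hW0] at h0
      simp [PowerSeries.coeff_one, PowerSeries.coeff_mul,
        Finset.Nat.sum_antidiagonal_eq_sum_range_succ_mk, Finset.sum_range_succ,
        PowerSeries.coeff_X_pow] at h0
  have hne1 : (1 - X * Skew.gfT : PowerSeries ℚ) ≠ 0 := by
    intro h
    have h0 := congrArg (PowerSeries.coeff 0) h
    simp [PowerSeries.coeff_one, PowerSeries.coeff_mul,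
      Finset.Nat.sum_antidiagonal_eq_sum_range_succ_mk, Finset.sum_range_succ] at h0
  have hne2 : (1 - X ^ 2 * Skew.gfM : PowerSeries ℚ) ≠ 0 := by
    intro h
    have h0 := congrArg (PowerSeries.coeff 0) h
    simp [PowerSeries.coeff_one, PowerSeries.coeff_mul,
      Finset.Nat.sum_antidiagonal_eq_sum_range_succ_mk, Finset.sum_range_succ,
      PowerSeries.coeff_X_pow] at h0
  have hkey : (S1 * (2 * X * (X ^ 2 + 2 * X - 1))
      + ((X + 1) * (X ^ 2 + 3 * X - 2) + (X + 2) * W))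
      * ((1 - X * Skew.gfT) * (1 - X ^ 2 * Skew.gfM)) = 0 := by
    rw [hS1F, hVW]
    linear_combination ((1 - (X : ℚ⟦X⟧) ^ 2 * Skew.gfM) * (2 * X * (X ^ 2 + 2 * X - 1))) * hF
      + (2 * (X : ℚ⟦X⟧) * (-1 - X - X ^ 2 + X ^ 3 * Skew.gfM + 2 * X ^ 2 * Skew.gfM)) * hT
      + (-2 * (X : ℚ⟦X⟧)) * hR + (-2 * (X : ℚ⟦X⟧) * (1 - X ^ 2 * Skew.gfM)) * hM
  have hmain : S1 * (2 * X * (X ^ 2 + 2 * X - 1))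
      = -((X + 1) * (X ^ 2 + 3 * X - 2) + (X + 2) * W) := by
    have h2 := (mul_eq_zero.1 hkey).resolve_right (mul_ne_zero hne1 hne2)
    linear_combination h2
  refine ⟨hmain, ?_, ?_, ?_, ?_, ?_, ?_, ?_, ?_, ?_, ?_, ?_⟩ <;>
    rw [hS1F, Skew.coeff_gfF]
  · rw [Skew.fv0]; norm_num
  · rw [Skew.fv1]; norm_num
  · rw [Skew.fv2]; norm_num
  · rw [Skew.fv3]; norm_num
  · rw [Skew.fv4]; norm_num
  · rw [Skew.fv5]; norm_num
  · rw [Skew.fv6]; norm_num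
  · rw [Skew.fv7]; norm_num
  · rw [Skew.fv8]; norm_num
  · rw [Skew.fv9]; norm_num
  · rw [Skew.fv10]; norm_num
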